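/- Let n ≥ 1 and let Z_1, …, Z_n be exchangeable real random variables that are almost surely distinct. For any α ∈ (0, 1], P(Z_n ≤ Z_{(⌈αn⌉, n)}) ≤ α + 1/n, where Z_{(⌈αn⌉, n)} is the ⌈αn⌉-th smallest value among Z_1, …, Z_n. -/

import Mathlib

open MeasureTheory Filter

/-- The `k`-th smallest value (1-indexed) among `v 0, …, v (n-1)`,
counted with multiplicity. -/
noncomputable def kthSmallest {n : ℕ} (v : Fin n → ℝ) (k : ℕ) : ℝ :=
  if h : k - 1 < n then v (Tuple.sort v ⟨k - 1, h⟩) else 0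

/-- Real random variables `Z 0, …, Z (m-1)` are exchangeable if for every
permutation `σ` of the indices, the permuted vector has the same joint law. -/
def Exchangeable {Ω : Type*} [MeasurableSpace Ω] (P : Measure Ω) {m : ℕ}
    (Z : Fin m → Ω → ℝ) : Prop :=
  ∀ σ : Equiv.Perm (Fin m),
    Measure.map (fun ω => fun i => Z (σ i) ω) P = Measure.map (fun ω => fun i => Z i ω) P

lemma kthSmallest_comp_perm {n k : ℕ} (v : Fin n → ℝ) (σ : Equiv.Perm (Fin n)) :
    kthSmallest (v ∘ σ) k = kthSmallest v k := by
  unfold kthSmallest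
  by_cases h : k - 1 < n
  · simp only [dif_pos h]
    exact congrFun (Tuple.comp_perm_comp_sort_eq_comp_sort (f := v) (σ := σ)) ⟨k - 1, h⟩
  · simp [h]

lemma measurableSet_sortEq {n : ℕ} (σ : Equiv.Perm (Fin n)) :
    MeasurableSet {v : Fin n → ℝ | Tuple.sort v = σ} := by
  have hset : {v : Fin n → ℝ | Tuple.sort v = σ} =
      (⋂ i, ⋂ j, {v : Fin n → ℝ | i ≤ j → v (σ i) ≤ v (σ j)}) ∩
      (⋂ i, ⋂ j, {v : Fin n → ℝ | i < j → v (σ i) = v (σ j) → σ i < σ j}) := by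
    ext v
    simp only [Set.mem_setOf_eq, Set.mem_inter_iff, Set.mem_iInter]
    rw [show (Tuple.sort v = σ) ↔ (σ = Tuple.sort v) from eq_comm, Tuple.eq_sort_iff]
    constructor
    · rintro ⟨h1, h2⟩
      exact ⟨fun i j hij => h1 hij, fun i j => h2 i j⟩
    · rintro ⟨h1, h2⟩
      exact ⟨fun i j hij => h1 i j hij, fun i j => h2 i j⟩
  rw [hset]
  apply MeasurableSet.inter
  · refine MeasurableSet.iInter fun i => MeasurableSet.iInter fun j => ?_
    by_cases hij : i ≤ j
    · simp only [hij, forall_true_left]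
      exact measurableSet_le (measurable_pi_apply _) (measurable_pi_apply _)
    · simp only [hij, false_implies]
      exact MeasurableSet.univ
  · refine MeasurableSet.iInter fun i => MeasurableSet.iInter fun j => ?_
    by_cases hij : i < j
    · by_cases hσ : σ i < σ j
      · simp only [hij, hσ, forall_true_left, implies_true]
        exact MeasurableSet.univ
      · have : {v : Fin n → ℝ | i < j → v (σ i) = v (σ j) → σ i < σ j} =
            {v : Fin n → ℝ | v (σ i) = v (σ j)}ᶜ := by
          ext v; simp only [Set.mem_setOf_eq, Set.mem_compl_iff, hij, forall_true_left]
          exact ⟨fun h he => hσ (h he), fun h he => absurd he h⟩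
        rw [this]
        exact (measurableSet_eq_fun (measurable_pi_apply (X := fun _ : Fin n => ℝ) (σ i))
          (measurable_pi_apply (σ j))).compl
    · simp only [hij, false_implies]
      exact MeasurableSet.univ

lemma measurable_kthSmallest {n k : ℕ} :
    Measurable (fun v : Fin n → ℝ => kthSmallest v k) := by
  unfold kthSmallest
  by_cases h : k - 1 < n
  · simp only [dif_pos h]
    have heq : (fun v : Fin n → ℝ => v (Tuple.sort v ⟨k - 1, h⟩)) =
        fun v => ∑ σ : Equiv.Perm (Fin n),
          Set.indicator {w : Fin n → ℝ | Tuple.sort w = σ} (fun w => w (σ ⟨k - 1, h⟩)) v := by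
      funext v
      rw [Finset.sum_eq_single (Tuple.sort v)]
      · rw [Set.indicator_of_mem (by simp : v ∈ {w : Fin n → ℝ | Tuple.sort w = Tuple.sort v})]
      · intro b _ hb
        refine Set.indicator_of_notMem (fun hv => hb ?_) _
        simpa only [Set.mem_setOf_eq, eq_comm] using hv
      · simp
    rw [heq]
    exact Finset.measurable_sum _ fun σ _ =>
      (measurable_pi_apply _).indicator (measurableSet_sortEq σ)
  · simp only [dif_neg h]; exact measurable_const

lemma card_le_kthSmallest {n k : ℕ} (v : Fin n → ℝ) (hv : Function.Injective v)
    (hk1 : 1 ≤ k) (hkn : k ≤ n) :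
    (Finset.univ.filter fun i => v i ≤ kthSmallest v k).card = k := by
  have h : k - 1 < n := by omega
  set σ := Tuple.sort v with hσ
  have hkth : kthSmallest v k = v (σ ⟨k - 1, h⟩) := dif_pos h
  have hmono : StrictMono (v ∘ σ) :=
    (Tuple.monotone_sort v).strictMono_of_injective (hv.comp σ.injective)
  have h1 : (Finset.univ.filter fun i => v i ≤ kthSmallest v k) =
      Finset.map σ.toEmbedding (Finset.univ.filter fun j => v (σ j) ≤ kthSmallest v k) := by
    ext i
    simp only [Finset.mem_filter, Finset.mem_univ, true_and, Finset.mem_map,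
      Equiv.coe_toEmbedding]
    constructor
    · intro hi; exact ⟨σ.symm i, by simpa using hi, by simp⟩
    · rintro ⟨j, hj, rfl⟩; exact hj
  rw [h1, Finset.card_map]
  have h2 : (Finset.univ.filter fun j => v (σ j) ≤ kthSmallest v k) =
      Finset.univ.filter fun j => j ≤ (⟨k - 1, h⟩ : Fin n) := by
    ext j
    simp only [Finset.mem_filter, Finset.mem_univ, true_and, hkth]
    exact hmono.le_iff_le
  rw [h2]
  have : (Finset.univ.filter fun j => j ≤ (⟨k - 1, h⟩ : Fin n)) = Finset.Iic ⟨k - 1, h⟩ := by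
    ext j; simp
  rw [this, Fin.card_Iic]
  show k - 1 + 1 = k
  omega
theorem quantiles_exchangeability_upper
    {Ω : Type*} [MeasurableSpace Ω] (P : Measure Ω) [IsProbabilityMeasure P]
    (n : ℕ) (hn : 1 ≤ n) (Z : Fin n → Ω → ℝ) (hmeas : ∀ i, Measurable (Z i))
    (hexch : Exchangeable P Z)
    (hdist : ∀ i j, i ≠ j → P {ω | Z i ω = Z j ω} = 0)
    (α : ℝ) (hα : α ∈ Set.Ioc (0 : ℝ) 1) :
    (P {ω | Z ⟨n - 1, by omega⟩ ω ≤
        kthSmallest (fun i => Z i ω) ⌈α * (n : ℝ)⌉₊}).toReal ≤ α + 1 / n := by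
  obtain ⟨hα0, hα1⟩ := hα
  set k : ℕ := ⌈α * (n : ℝ)⌉₊ with hkdef
  have hn0 : (0 : ℝ) < n := by exact_mod_cast hn
  have hk1 : 1 ≤ k := Nat.one_le_iff_ne_zero.mpr (by
    simp only [hkdef, ne_eq, Nat.ceil_eq_zero, not_le]
    positivity)
  have hkn : k ≤ n := Nat.ceil_le.mpr (by nlinarith)
  set last : Fin n := ⟨n - 1, by omega⟩ with hlast
  set T : Ω → (Fin n → ℝ) := fun ω i => Z i ω with hT
  have hTm : Measurable T := measurable_pi_lambda _ hmeas
  set S : Fin n → Set (Fin n → ℝ) := fun i => {v | v i ≤ kthSmallest v k} with hS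
  have hSm : ∀ i, MeasurableSet (S i) := fun i =>
    measurableSet_le (measurable_pi_apply i) measurable_kthSmallest
  set A : Fin n → Set Ω := fun i => T ⁻¹' (S i) with hA
  have hAm : ∀ i, MeasurableSet (A i) := fun i => hTm (hSm i)
  -- all P (A i) are equal
  have hAeq : ∀ σ : Equiv.Perm (Fin n), ∀ i, P (A (σ i)) = P (A i) := by
    intro σ i
    have hTσ : Measurable (fun ω => fun l => Z (σ l) ω) :=
      measurable_pi_lambda _ fun l => hmeas (σ l)
    have hpre : (fun ω => fun l => Z (σ l) ω) ⁻¹' (S i) = A (σ i) := by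
      ext ω
      simp only [Set.mem_preimage, hS, Set.mem_setOf_eq, hA]
      have : (fun l => Z (σ l) ω) = T ω ∘ σ := rfl
      rw [this, kthSmallest_comp_perm]
    calc P (A (σ i)) = P ((fun ω => fun l => Z (σ l) ω) ⁻¹' (S i)) := by rw [hpre]
      _ = Measure.map (fun ω => fun l => Z (σ l) ω) P (S i) :=
          (Measure.map_apply hTσ (hSm i)).symm
      _ = Measure.map T P (S i) := by rw [hexch σ]
      _ = P (A i) := Measure.map_apply hTm (hSm i)
  have hAconst : ∀ i, P (A i) = P (A last) := by
    intro i
    have := hAeq (Equiv.swap i last) i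
    rw [Equiv.swap_apply_left] at this
    exact this.symm
  -- a.e. injectivity
  have hinj : ∀ᵐ ω ∂P, Function.Injective (T ω) := by
    have : {ω | ¬ Function.Injective (T ω)} ⊆
        ⋃ i, ⋃ j, ⋃ (_ : i ≠ j), {ω | Z i ω = Z j ω} := by
      intro ω hω
      simp only [Set.mem_setOf_eq, Function.Injective, not_forall] at hω
      obtain ⟨i, j, hij, hne⟩ := hω
      exact Set.mem_iUnion.mpr ⟨i, Set.mem_iUnion.mpr ⟨j, Set.mem_iUnion.mpr ⟨hne, hij⟩⟩⟩
    have h0 : P (⋃ i, ⋃ j, ⋃ (_ : i ≠ j), {ω | Z i ω = Z j ω}) = 0 :=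
      measure_iUnion_null fun i => measure_iUnion_null fun j =>
        measure_iUnion_null fun hij => hdist i j hij
    exact measure_mono_null this h0
  -- sum of measures equals k
  have hsum : ∑ i : Fin n, P (A i) = k := by
    have h1 : ∀ i : Fin n, P (A i) = ∫⁻ ω, (A i).indicator (fun _ => (1 : ENNReal)) ω ∂P := by
      intro i
      rw [lintegral_indicator (hAm i)]
      simp
    calc ∑ i : Fin n, P (A i)
        = ∑ i : Fin n, ∫⁻ ω, (A i).indicator (fun _ => (1 : ENNReal)) ω ∂P := by
          exact Finset.sum_congr rfl fun i _ => h1 i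
      _ = ∫⁻ ω, ∑ i : Fin n, (A i).indicator (fun _ => (1 : ENNReal)) ω ∂P := by
          rw [lintegral_finset_sum]
          exact fun i _ => (measurable_const.indicator (hAm i))
      _ = ∫⁻ _, (k : ENNReal) ∂P := by
          refine lintegral_congr_ae ?_
          filter_upwards [hinj] with ω hω
          have hcard : (Finset.univ.filter fun i => T ω i ≤ kthSmallest (T ω) k).card = k :=
            card_le_kthSmallest (T ω) hω hk1 hkn
          calc ∑ i : Fin n, (A i).indicator (fun _ => (1 : ENNReal)) ω
              = ∑ i : Fin n, if T ω i ≤ kthSmallest (T ω) k then (1 : ENNReal) else 0 := by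
                refine Finset.sum_congr rfl fun i _ => ?_
                by_cases hi : T ω i ≤ kthSmallest (T ω) k
                · rw [if_pos hi, Set.indicator_of_mem (show ω ∈ A i from hi)]
                · rw [if_neg hi, Set.indicator_of_notMem (show ω ∉ A i from hi)]
            _ = ((Finset.univ.filter fun i => T ω i ≤ kthSmallest (T ω) k).card : ENNReal) := by
                simp [Finset.sum_boole]
            _ = (k : ENNReal) := by rw [hcard]
      _ = (k : ENNReal) := by simp
  have hnP : (n : ENNReal) * P (A last) = k := by
    rw [← hsum]
    rw [Finset.sum_congr rfl fun i _ => hAconst i]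
    simp [mul_comm]
  -- conclude
  have hgoal_eq : {ω | Z last ω ≤ kthSmallest (fun i => Z i ω) k} = A last := rfl
  have hPval : (P (A last)).toReal = (k : ℝ) / n := by
    have hfin : P (A last) ≠ ⊤ := measure_ne_top P _
    have : ((n : ENNReal) * P (A last)).toReal = ((k : ENNReal)).toReal := by rw [hnP]
    rw [ENNReal.toReal_mul] at this
    simp only [ENNReal.toReal_natCast] at this
    field_simp
    linarith [this]
  rw [hgoal_eq, hPval]
  have hkle : (k : ℝ) ≤ α * n + 1 := by
    have := Nat.ceil_lt_add_one (by positivity : (0:ℝ) ≤ α * n)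
    exact_mod_cast this.le
  rw [div_le_iff₀ hn0]
  have : (α + 1 / n) * n = α * n + 1 := by field_simp
  rw [this]
  exact hkle
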